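/- With G(u,d) = D_KL(π_{(h(u,d),d)}‖π) as above, for u in the interior of the mean range, ∂G/∂u = h(u,d) − b''(0)·(d/2)·Cov_{π_{(h(u,d),d)}}(X, X²) / Var_{π_{(h(u,d),d)}}(X). -/

import Mathlib

open MeasureTheory ProbabilityTheory

/-- Log-normalizer `c_π(γ,d) = log ∫ exp(γx - c(d/2)x²) dπ(x)` (as a function of `γ`). -/
noncomputable def cpi (pi0 : Measure ℝ) (c d : ℝ) (γ : ℝ) : ℝ :=
  Real.log (∫ x, Real.exp (γ * x - c * (d / 2) * x ^ 2) ∂pi0)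

/-- The normalized quadratic tilt `dπ_{(γ,d)}/dπ(x) = exp(γx - c(d/2)x² - c_π(γ,d))`. -/
noncomputable def tiltG (pi0 : Measure ℝ) (c d : ℝ) (γ : ℝ) : Measure ℝ :=
  pi0.withDensity (fun x => ENNReal.ofReal
    (Real.exp (γ * x - c * (d / 2) * x ^ 2 - cpi pi0 c d γ)))

/-- Kullback–Leibler divergence `∫ log(dP/dQ) dP` (real-valued). -/
noncomputable def klReal {α : Type*} [MeasurableSpace α] (P Q : Measure α) : ℝ :=
  ∫ x, Real.log ((P.rnDeriv Q x).toReal) ∂P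

namespace AuxKL

open Filter
open scoped NNReal ENNReal

/-- the `n`-th moment of the unnormalized tilt -/
noncomputable def Z (pi0 : Measure ℝ) (a : ℝ) (n : ℕ) (γ : ℝ) : ℝ :=
  ∫ x, x ^ n * Real.exp (γ * x - a * x ^ 2) ∂pi0

lemma contF (a : ℝ) (n : ℕ) (γ : ℝ) :
    Continuous (fun x : ℝ => x ^ n * Real.exp (γ * x - a * x ^ 2)) := by
  fun_prop

variable (pi0 : Measure ℝ) [IsProbabilityMeasure pi0]
  (hsupp : pi0 (Set.Icc (-1 : ℝ) 1)ᶜ = 0) (a : ℝ)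

include hsupp in
lemma ae_abs_le : ∀ᵐ x ∂pi0, |x| ≤ 1 := by
  rw [ae_iff]
  convert hsupp using 2
  ext x
  simp [abs_le]

lemma norm_le (n : ℕ) (γ₀ : ℝ) {γ x : ℝ} (hx : |x| ≤ 1) (hγ : γ ∈ Metric.ball γ₀ 1) :
    ‖x ^ n * Real.exp (γ * x - a * x ^ 2)‖ ≤ Real.exp (|γ₀| + 1 + |a|) := by
  have hxn : |x| ^ n ≤ 1 := pow_le_one₀ (abs_nonneg x) hx
  have hγ' : |γ| ≤ |γ₀| + 1 := by
    have := (abs_sub_abs_le_abs_sub γ γ₀).trans (le_of_lt (by simpa [Real.dist_eq] using hγ))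
    linarith
  have h1 : γ * x ≤ |γ₀| + 1 := by
    calc γ * x ≤ |γ * x| := le_abs_self _
    _ = |γ| * |x| := abs_mul _ _
    _ ≤ (|γ₀| + 1) * 1 := by
        apply mul_le_mul hγ' hx (abs_nonneg x) (by positivity)
    _ = |γ₀| + 1 := mul_one _
  have h2 : -(a * x ^ 2) ≤ |a| := by
    calc -(a * x ^ 2) ≤ |a * x ^ 2| := neg_le_abs _
    _ = |a| * |x| ^ 2 := by rw [abs_mul, abs_pow]
    _ ≤ |a| * 1 := by
        apply mul_le_mul_of_nonneg_left (pow_le_one₀ (abs_nonneg x) hx) (abs_nonneg a)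
    _ = |a| := mul_one _
  calc ‖x ^ n * Real.exp (γ * x - a * x ^ 2)‖
      = |x| ^ n * Real.exp (γ * x - a * x ^ 2) := by
        rw [Real.norm_eq_abs, abs_mul, abs_pow, Real.abs_exp]
    _ ≤ 1 * Real.exp (|γ₀| + 1 + |a|) := by
        apply mul_le_mul hxn (Real.exp_le_exp.2 (by linarith)) (Real.exp_pos _).le one_pos.le
    _ = Real.exp (|γ₀| + 1 + |a|) := one_mul _

include hsupp in
lemma intF (n : ℕ) (γ : ℝ) :
    Integrable (fun x => x ^ n * Real.exp (γ * x - a * x ^ 2)) pi0 := by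
  refine (integrable_const (Real.exp (|γ| + 1 + |a|))).mono'
    ((contF a n γ).aestronglyMeasurable) ?_
  filter_upwards [ae_abs_le pi0 hsupp] with x hx
  exact norm_le a n γ hx (Metric.mem_ball_self one_pos)

include hsupp in
lemma Z0_pos (γ : ℝ) : 0 < Z pi0 a 0 γ := by
  rw [Z]
  rw [integral_pos_iff_support_of_nonneg_ae]
  · have : Function.support (fun x : ℝ => x ^ 0 * Real.exp (γ * x - a * x ^ 2)) = Set.univ := by
      ext x; simp [(Real.exp_pos _).ne']
    rw [this]
    simp
  · filter_upwards with x
    positivity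
  · exact intF pi0 hsupp a 0 γ

include hsupp in
lemma hasDerivAt_Z (n : ℕ) (γ₀ : ℝ) :
    HasDerivAt (Z pi0 a n) (Z pi0 a (n + 1) γ₀) γ₀ := by
  have key := hasDerivAt_integral_of_dominated_loc_of_deriv_le (μ := pi0)
      (F := fun γ (x : ℝ) => x ^ n * Real.exp (γ * x - a * x ^ 2))
      (F' := fun γ (x : ℝ) => x ^ (n + 1) * Real.exp (γ * x - a * x ^ 2))
      (x₀ := γ₀) (bound := fun _ => Real.exp (|γ₀| + 1 + |a|)) (Metric.ball_mem_nhds γ₀ one_pos)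
      (.of_forall fun γ => (contF a n γ).aestronglyMeasurable)
      (intF pi0 hsupp a n γ₀)
      ((contF a (n + 1) γ₀).aestronglyMeasurable)
      ?_ (integrable_const _) ?_
  · exact key.2
  · filter_upwards [ae_abs_le pi0 hsupp] with x hx γ hγ
    exact norm_le a (n + 1) γ₀ hx hγ
  · filter_upwards with x γ hγ
    have h1 : HasDerivAt (fun γ : ℝ => γ * x - a * x ^ 2) x γ := by
      simpa using ((hasDerivAt_id γ).mul_const x).sub_const (a * x ^ 2)
    have h2 := h1.exp.const_mul (x ^ n)
    refine h2.congr_deriv ?_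
    rw [pow_succ]
    ring

include hsupp in
lemma hasDerivAt_cpi (γ : ℝ) :
    HasDerivAt (fun γ => Real.log (Z pi0 a 0 γ)) (Z pi0 a 1 γ / Z pi0 a 0 γ) γ :=
  (hasDerivAt_Z pi0 hsupp a 0 γ).log (Z0_pos pi0 hsupp a γ).ne'

lemma cpi_eq (c d : ℝ) : cpi pi0 c d = fun γ => Real.log (Z pi0 (c * (d / 2)) 0 γ) := by
  funext γ
  simp [cpi, Z]

/-- the normalized tilt, with `a = c * (d/2)` -/
noncomputable def tilt (γ : ℝ) : Measure ℝ :=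
  pi0.withDensity fun x =>
    ENNReal.ofReal (Real.exp (γ * x - a * x ^ 2 - Real.log (Z pi0 a 0 γ)))

lemma tiltG_eq (c d γ : ℝ) : tiltG pi0 c d γ = tilt pi0 (c * (d / 2)) γ := by
  rw [tiltG, tilt, cpi_eq]

lemma tilt_ac (γ : ℝ) : tilt pi0 a γ ≪ pi0 := withDensity_absolutelyContinuous _ _

lemma contDens (γ : ℝ) :
    Continuous (fun x : ℝ => Real.exp (γ * x - a * x ^ 2 - Real.log (Z pi0 a 0 γ))) := by
  fun_prop

include hsupp in
lemma integral_tilt (γ : ℝ) (g : ℝ → ℝ) :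
    ∫ x, g x ∂tilt pi0 a γ
      = (∫ x, g x * Real.exp (γ * x - a * x ^ 2) ∂pi0) / Z pi0 a 0 γ := by
  have hz := Z0_pos pi0 hsupp a γ
  have hmeas : Measurable fun x : ℝ =>
      Real.toNNReal (Real.exp (γ * x - a * x ^ 2 - Real.log (Z pi0 a 0 γ))) :=
    (contDens pi0 a γ).measurable.real_toNNReal
  rw [tilt]
  rw [show (fun x : ℝ => ENNReal.ofReal
        (Real.exp (γ * x - a * x ^ 2 - Real.log (Z pi0 a 0 γ))))
      = (fun x : ℝ => ((Real.toNNReal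
        (Real.exp (γ * x - a * x ^ 2 - Real.log (Z pi0 a 0 γ))) : ℝ≥0) : ℝ≥0∞)) from rfl]
  rw [integral_withDensity_eq_integral_smul hmeas]
  have hcoe : ∀ x : ℝ, ((Real.toNNReal
      (Real.exp (γ * x - a * x ^ 2 - Real.log (Z pi0 a 0 γ))) : ℝ≥0) : ℝ)
      = Real.exp (γ * x - a * x ^ 2 - Real.log (Z pi0 a 0 γ)) :=
    fun x => Real.coe_toNNReal _ (Real.exp_pos _).le
  rw [div_eq_mul_inv, ← integral_mul_const]
  refine integral_congr_ae (.of_forall fun x => ?_)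
  simp only [NNReal.smul_def, hcoe x, smul_eq_mul]
  rw [Real.exp_sub, Real.exp_log hz, div_eq_mul_inv]
  ring

include hsupp in
lemma isProb_tilt (γ : ℝ) : IsProbabilityMeasure (tilt pi0 a γ) := by
  have hz := Z0_pos pi0 hsupp a γ
  constructor
  have hd : (fun x : ℝ => Real.exp (γ * x - a * x ^ 2 - Real.log (Z pi0 a 0 γ)))
      = fun x => (x ^ 0 * Real.exp (γ * x - a * x ^ 2)) * (Z pi0 a 0 γ)⁻¹ := by
    funext x
    rw [Real.exp_sub, Real.exp_log hz, pow_zero, one_mul, div_eq_mul_inv]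
  rw [tilt, withDensity_apply _ MeasurableSet.univ, setLIntegral_univ,
    ← ofReal_integral_eq_lintegral_ofReal]
  · rw [hd, integral_mul_const]
    have : (∫ x, x ^ 0 * Real.exp (γ * x - a * x ^ 2) ∂pi0) = Z pi0 a 0 γ := rfl
    rw [this, mul_inv_cancel₀ hz.ne', ENNReal.ofReal_one]
  · rw [hd]
    exact (intF pi0 hsupp a 0 γ).mul_const _
  · filter_upwards with x
    exact (Real.exp_pos _).le

include hsupp in
lemma moment_tilt (γ : ℝ) (n : ℕ) :
    ∫ x, x ^ n ∂tilt pi0 a γ = Z pi0 a n γ / Z pi0 a 0 γ := by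
  rw [integral_tilt pi0 hsupp a γ]
  rfl

include hsupp in
lemma mean_tilt (γ : ℝ) :
    ∫ x, x ∂tilt pi0 a γ = Z pi0 a 1 γ / Z pi0 a 0 γ := by
  have := moment_tilt pi0 hsupp a γ 1
  simpa using this

include hsupp in
lemma m3_tilt (γ : ℝ) :
    ∫ x, x * x ^ 2 ∂tilt pi0 a γ = Z pi0 a 3 γ / Z pi0 a 0 γ := by
  have := moment_tilt pi0 hsupp a γ 3
  rw [← this]
  refine integral_congr_ae (.of_forall fun x => ?_)
  ring

include hsupp in
lemma memL2_tilt (γ : ℝ) : MemLp id 2 (tilt pi0 a γ) := by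
  haveI := isProb_tilt pi0 hsupp a γ
  refine memLp_of_bounded (a := (-1 : ℝ)) (b := (1 : ℝ)) ?_ aestronglyMeasurable_id 2
  filter_upwards [(tilt_ac pi0 a γ).ae_le (ae_abs_le pi0 hsupp)] with x hx
  exact abs_le.mp hx

include hsupp in
lemma variance_tilt (γ : ℝ) :
    variance id (tilt pi0 a γ)
      = Z pi0 a 2 γ / Z pi0 a 0 γ - (Z pi0 a 1 γ / Z pi0 a 0 γ) ^ 2 := by
  haveI := isProb_tilt pi0 hsupp a γ
  rw [variance_eq_sub (memL2_tilt pi0 hsupp a γ)]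
  have h1 : ∫ x, (id ^ 2 : ℝ → ℝ) x ∂tilt pi0 a γ = Z pi0 a 2 γ / Z pi0 a 0 γ := by
    rw [← moment_tilt pi0 hsupp a γ 2]
    refine integral_congr_ae (.of_forall fun x => ?_)
    simp
  have h2 : ∫ x, id x ∂tilt pi0 a γ = Z pi0 a 1 γ / Z pi0 a 0 γ := by
    rw [← mean_tilt pi0 hsupp a γ]
    rfl
  rw [h1, h2]

include hsupp in
lemma variance_tilt_pos (γ : ℝ)
    (hnontriv : ∃ s : Set ℝ, MeasurableSet s ∧ 0 < pi0 s ∧ pi0 s < 1) :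
    0 < variance id (tilt pi0 a γ) := by
  haveI := isProb_tilt pi0 hsupp a γ
  rw [variance]
  refine ENNReal.toReal_pos ?_ (memL2_tilt pi0 hsupp a γ).evariance_lt_top.ne
  intro h0
  rw [evariance_eq_zero_iff aemeasurable_id] at h0
  set m := ∫ x, id x ∂tilt pi0 a γ with hm
  have h0' : ∀ᵐ x ∂tilt pi0 a γ, x ∈ ({m} : Set ℝ) := h0.mono fun x hx => by simpa using hx
  have hnull : tilt pi0 a γ {m}ᶜ = 0 := ae_iff.mp h0'
  have hπ : pi0 {m}ᶜ = 0 := by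
    rw [tilt, withDensity_apply _ (measurableSet_singleton m).compl] at hnull
    have hmeas : Measurable fun x : ℝ => ENNReal.ofReal
        (Real.exp (γ * x - a * x ^ 2 - Real.log (Z pi0 a 0 γ))) :=
      (contDens pi0 a γ).measurable.ennreal_ofReal
    rw [lintegral_eq_zero_iff hmeas, Filter.EventuallyEq, ae_iff] at hnull
    simp only [Pi.zero_apply] at hnull
    have hset : {x : ℝ | ¬ ENNReal.ofReal
        (Real.exp (γ * x - a * x ^ 2 - Real.log (Z pi0 a 0 γ))) = 0} = Set.univ := by
      ext x
      simpa using (ENNReal.ofReal_pos.mpr (Real.exp_pos _)).ne'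
    rw [hset, Measure.restrict_apply_univ] at hnull
    exact hnull
  obtain ⟨s, hs, hs0, hs1⟩ := hnontriv
  by_cases hms : m ∈ s
  · have : (1 : ℝ≥0∞) ≤ pi0 s := by
      have h1 : pi0 {m} = 1 :=
        (prob_compl_eq_zero_iff (measurableSet_singleton m)).mp hπ
      calc (1 : ℝ≥0∞) = pi0 {m} := h1.symm
      _ ≤ pi0 s := measure_mono (Set.singleton_subset_iff.mpr hms)
    exact absurd this (not_le.mpr hs1)
  · have : pi0 s = 0 :=
      measure_mono_null (fun x hx => by
        simp only [Set.mem_compl_iff, Set.mem_singleton_iff]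
        rintro rfl
        exact hms hx) hπ
    exact absurd this hs0.ne'

include hsupp in
lemma klReal_tilt (γ : ℝ) :
    klReal (tilt pi0 a γ) pi0
      = γ * (Z pi0 a 1 γ / Z pi0 a 0 γ) - a * (Z pi0 a 2 γ / Z pi0 a 0 γ)
          - Real.log (Z pi0 a 0 γ) := by
  have hz := Z0_pos pi0 hsupp a γ
  set K := Real.log (Z pi0 a 0 γ) with hK
  have hmeas : Measurable fun x : ℝ => ENNReal.ofReal
      (Real.exp (γ * x - a * x ^ 2 - K)) :=
    (contDens pi0 a γ).measurable.ennreal_ofReal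
  have hrn : (tilt pi0 a γ).rnDeriv pi0 =ᵐ[pi0]
      fun x => ENNReal.ofReal (Real.exp (γ * x - a * x ^ 2 - K)) :=
    Measure.rnDeriv_withDensity pi0 hmeas
  have hae : ∀ᵐ x ∂pi0, Real.log (((tilt pi0 a γ).rnDeriv pi0 x).toReal)
      = γ * x - a * x ^ 2 - K := by
    filter_upwards [hrn] with x hx
    rw [hx, ENNReal.toReal_ofReal (Real.exp_pos _).le, Real.log_exp]
  have hae' := (tilt_ac pi0 a γ).ae_le hae
  rw [klReal, integral_congr_ae hae', integral_tilt pi0 hsupp a γ]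
  have hsplit : (fun x => (γ * x - a * x ^ 2 - K) * Real.exp (γ * x - a * x ^ 2))
      = fun x => γ * (x ^ 1 * Real.exp (γ * x - a * x ^ 2))
          - a * (x ^ 2 * Real.exp (γ * x - a * x ^ 2))
          - K * (x ^ 0 * Real.exp (γ * x - a * x ^ 2)) := by
    funext x; ring
  have i1 : Integrable (fun x => γ * (x ^ 1 * Real.exp (γ * x - a * x ^ 2))) pi0 :=
    (intF pi0 hsupp a 1 γ).const_mul γ
  have i2 : Integrable (fun x => a * (x ^ 2 * Real.exp (γ * x - a * x ^ 2))) pi0 :=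
    (intF pi0 hsupp a 2 γ).const_mul a
  have i0 : Integrable (fun x => K * (x ^ 0 * Real.exp (γ * x - a * x ^ 2))) pi0 :=
    (intF pi0 hsupp a 0 γ).const_mul K
  have i12 : Integrable (fun x => γ * (x ^ 1 * Real.exp (γ * x - a * x ^ 2))
      - a * (x ^ 2 * Real.exp (γ * x - a * x ^ 2))) pi0 := i1.sub i2
  rw [hsplit, integral_sub i12 i0, integral_sub i1 i2,
    integral_const_mul, integral_const_mul, integral_const_mul]
  have e1 : (∫ x, x ^ 1 * Real.exp (γ * x - a * x ^ 2) ∂pi0) = Z pi0 a 1 γ := rfl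
  have e2 : (∫ x, x ^ 2 * Real.exp (γ * x - a * x ^ 2) ∂pi0) = Z pi0 a 2 γ := rfl
  have e0 : (∫ x, x ^ 0 * Real.exp (γ * x - a * x ^ 2) ∂pi0) = Z pi0 a 0 γ := rfl
  rw [e1, e2, e0]
  field_simp

end AuxKL

open AuxKL Filter in
/-- with `G(u,d) = D_KL(π_{(h(u,d),d)}‖π)` and `h` the inverse of
`γ ↦ ∂_γ c_π(γ,d)` on an open set `U` in the interior of the mean range,
`∂G/∂u = h(u,d) - c·(d/2)·Cov(X,X²)/Var(X)` under the tilt at `h(u,d)`. -/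
theorem deriv_kl_tilt (pi0 : Measure ℝ) [IsProbabilityMeasure pi0]
    (hsupp : pi0 (Set.Icc (-1 : ℝ) 1)ᶜ = 0)
    (hnontriv : ∃ s : Set ℝ, MeasurableSet s ∧ 0 < pi0 s ∧ pi0 s < 1)
    (c d : ℝ) (hd : 0 ≤ d) (h : ℝ → ℝ)
    (U : Set ℝ) (hU : IsOpen U)
    (hinv : ∀ u ∈ U, deriv (cpi pi0 c d) (h u) = u) :
    ∀ u ∈ U,
      deriv (fun v => klReal (tiltG pi0 c d (h v)) pi0) u
        = h u - c * (d / 2) *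
            (((∫ x, x * x ^ 2 ∂tiltG pi0 c d (h u))
                - (∫ x, x ∂tiltG pi0 c d (h u)) * ∫ x, x ^ 2 ∂tiltG pi0 c d (h u))
              / variance id (tiltG pi0 c d (h u))) := by
  intro u hu
  set a := c * (d / 2) with ha
  have hderiv_cpi : deriv (cpi pi0 c d) = fun γ => Z pi0 a 1 γ / Z pi0 a 0 γ := by
    funext γ
    rw [cpi_eq]
    exact (hasDerivAt_cpi pi0 hsupp a γ).deriv
  have hinv' : ∀ v ∈ U, Z pi0 a 1 (h v) / Z pi0 a 0 (h v) = v := by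
    intro v hv
    have := hinv v hv
    rwa [hderiv_cpi] at this
  have hVpos : ∀ γ, 0 < Z pi0 a 2 γ / Z pi0 a 0 γ - (Z pi0 a 1 γ / Z pi0 a 0 γ) ^ 2 := by
    intro γ
    have := variance_tilt_pos pi0 hsupp a γ hnontriv
    rwa [variance_tilt pi0 hsupp a γ] at this
  have hφderiv : ∀ γ, HasDerivAt (fun γ => Z pi0 a 1 γ / Z pi0 a 0 γ)
      (Z pi0 a 2 γ / Z pi0 a 0 γ - (Z pi0 a 1 γ / Z pi0 a 0 γ) ^ 2) γ := by
    intro γ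
    have hz := Z0_pos pi0 hsupp a γ
    have := (hasDerivAt_Z pi0 hsupp a 1 γ).div (hasDerivAt_Z pi0 hsupp a 0 γ) hz.ne'
    refine this.congr_deriv ?_
    field_simp
  have hmono : StrictMono (fun γ => Z pi0 a 1 γ / Z pi0 a 0 γ) :=
    strictMono_of_deriv_pos fun γ => by rw [(hφderiv γ).deriv]; exact hVpos γ
  have hcont : ContinuousAt h u := by
    refine Metric.tendsto_nhds.mpr fun ε hε => ?_
    have h1 : Z pi0 a 1 (h u - ε / 2) / Z pi0 a 0 (h u - ε / 2) < u := by
      have := hmono (show h u - ε / 2 < h u by linarith)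
      simpa [hinv' u hu] using this
    have h2 : u < Z pi0 a 1 (h u + ε / 2) / Z pi0 a 0 (h u + ε / 2) := by
      have := hmono (show h u < h u + ε / 2 by linarith)
      simpa [hinv' u hu] using this
    have hS : Set.Ioo (Z pi0 a 1 (h u - ε / 2) / Z pi0 a 0 (h u - ε / 2))
        (Z pi0 a 1 (h u + ε / 2) / Z pi0 a 0 (h u + ε / 2)) ∩ U ∈ nhds u :=
      (isOpen_Ioo.inter hU).mem_nhds ⟨⟨h1, h2⟩, hu⟩
    have key : ∀ x y : ℝ, Z pi0 a 1 x / Z pi0 a 0 x < Z pi0 a 1 y / Z pi0 a 0 y → x < y := by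
      intro x y hxy
      by_contra hc
      push_neg at hc
      exact absurd hxy (not_lt.mpr (hmono.le_iff_le.mpr hc))
    filter_upwards [hS] with v hv
    obtain ⟨⟨hv1, hv2⟩, hvU⟩ := hv
    rw [← hinv' v hvU] at hv1 hv2
    have e1 := key _ _ hv1
    have e2 := key _ _ hv2
    rw [Real.dist_eq, abs_sub_lt_iff]
    constructor <;> linarith
  set V := Z pi0 a 2 (h u) / Z pi0 a 0 (h u) - (Z pi0 a 1 (h u) / Z pi0 a 0 (h u)) ^ 2 with hV
  have hVp : 0 < V := hVpos (h u)
  have hh : HasDerivAt h V⁻¹ u :=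
    HasDerivAt.of_local_left_inverse hcont (hφderiv (h u)) hVp.ne'
      (Filter.eventually_of_mem (hU.mem_nhds hu) fun v hv => hinv' v hv)
  have hz := Z0_pos pi0 hsupp a (h u)
  set Cov := Z pi0 a 3 (h u) / Z pi0 a 0 (h u)
      - Z pi0 a 1 (h u) / Z pi0 a 0 (h u) * (Z pi0 a 2 (h u) / Z pi0 a 0 (h u)) with hCov
  have hM : HasDerivAt (fun γ => Z pi0 a 2 γ / Z pi0 a 0 γ) Cov (h u) := by
    have := (hasDerivAt_Z pi0 hsupp a 2 (h u)).div (hasDerivAt_Z pi0 hsupp a 0 (h u)) hz.ne'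
    refine this.congr_deriv ?_
    rw [hCov]
    field_simp
  have hZu : Z pi0 a 1 (h u) / Z pi0 a 0 (h u) = u := hinv' u hu
  have hF : HasDerivAt (fun v => h v * v - a * (Z pi0 a 2 (h v) / Z pi0 a 0 (h v))
      - Real.log (Z pi0 a 0 (h v)))
      ((V⁻¹ * u + h u * 1) - a * (Cov * V⁻¹) - u * V⁻¹) u := by
    have hA : HasDerivAt (fun v => h v * v) (V⁻¹ * u + h u * 1) u := hh.mul (hasDerivAt_id u)
    have hB : HasDerivAt (fun v => a * (Z pi0 a 2 (h v) / Z pi0 a 0 (h v)))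
        (a * (Cov * V⁻¹)) u := by
      have := (hM.comp u hh).const_mul a
      simpa [Function.comp] using this
    have hC : HasDerivAt (fun v => Real.log (Z pi0 a 0 (h v))) (u * V⁻¹) u := by
      have := (hasDerivAt_cpi pi0 hsupp a (h u)).comp u hh
      rw [hZu] at this
      exact this
    exact (hA.sub hB).sub hC
  have hev : (fun v => klReal (tiltG pi0 c d (h v)) pi0) =ᶠ[nhds u]
      (fun v => h v * v - a * (Z pi0 a 2 (h v) / Z pi0 a 0 (h v))
        - Real.log (Z pi0 a 0 (h v))) := by
    filter_upwards [hU.mem_nhds hu] with v hv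
    rw [tiltG_eq, ← ha, klReal_tilt pi0 hsupp a (h v), hinv' v hv]
  rw [hev.deriv_eq, hF.deriv, tiltG_eq, ← ha, m3_tilt pi0 hsupp a (h u),
    mean_tilt pi0 hsupp a (h u), moment_tilt pi0 hsupp a (h u) 2,
    variance_tilt pi0 hsupp a (h u), ← hV, ← hCov, div_eq_mul_inv]
  ring
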